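/- Let Ω ⊂ ℝ^d be a bounded domain and suppose κ > 0, U > 0 satisfy (U/κ)|Ω|^{1/4} < min{1, C_FP^{-2}‖i₄‖^{-2}}, where C_FP is the Friedrichs–Poincaré constant on H̃¹(Ω) = H¹(Ω) ∩ L⁴₀(Ω) and ‖i₄‖ is the norm of the embedding H¹(Ω) ↪ L⁴(Ω). Define Ã((s,φ),(r,ψ)) = κ∫_Ω s·r − U∫_Ω φ êd·r. Then for every pair (r,ψ) with ψ ∈ H̃¹(Ω) and r = ∇ψ, one has Ã((r,ψ),(r,ψ)) ≥ α̃ (‖r‖²_{L²} + ‖ψ‖²_{L⁴}), where α̃ = (κ/2)(min{1, C_FP^{-2}‖i₄‖^{-2}} − (U/κ)|Ω|^{1/4}) > 0. -/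

import Mathlib

open MeasureTheory

set_option maxHeartbeats 1600000

lemma aux_integral_sq_eq_norm_sq {α : Type*} [MeasurableSpace α] (μ : Measure α)
    {d : ℕ} (r : Lp (EuclideanSpace ℝ (Fin d)) 2 μ) :
    (∫ x, ∑ i, r x i * r x i ∂μ) = ‖r‖ ^ 2 := by
  have h := MeasureTheory.L2.inner_def (𝕜 := ℝ) r r
  rw [real_inner_self_eq_norm_sq] at h
  rw [h]
  congr 1

lemma aux_cross_bound {α : Type*} [MeasurableSpace α] (μ : Measure α)
    [IsFiniteMeasure μ] {d : ℕ} (j : Fin d)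
    (r : Lp (EuclideanSpace ℝ (Fin d)) 2 μ) (ψ : Lp ℝ 4 μ) :
    |∫ x, ψ x * r x j ∂μ| ≤ ((μ Set.univ).toReal ^ ((1:ℝ)/4) * ‖ψ‖) * ‖r‖ := by
  have hψ2 : MemLp (fun x => ψ x) 2 μ :=
    (Lp.memLp ψ).mono_exponent (by norm_num)
  have hbd : ∀ (v : EuclideanSpace ℝ (Fin d)), ‖v j‖ ≤ ‖v‖ := by
    intro v
    rw [EuclideanSpace.norm_eq, Real.norm_eq_abs, ← Real.sqrt_sq_eq_abs]
    apply Real.sqrt_le_sqrt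
    have : |v j| ^ 2 ≤ ∑ i, ‖v i‖ ^ 2 := by
      have := Finset.single_le_sum (f := fun i => ‖v i‖ ^ 2)
        (fun i _ => by positivity) (Finset.mem_univ j)
      simpa [Real.norm_eq_abs] using this
    simpa [sq_abs] using this
  have hgm : AEStronglyMeasurable (fun x => r x j) μ := by
    exact (EuclideanSpace.proj j).continuous.comp_aestronglyMeasurable
      (Lp.aestronglyMeasurable r)
  have hg2 : MemLp (fun x => r x j) 2 μ :=
    MemLp.of_le (Lp.memLp r) hgm (Filter.Eventually.of_forall fun x => hbd _)
  set ψ2 : Lp ℝ 2 μ := hψ2.toLp _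
  set g2 : Lp ℝ 2 μ := hg2.toLp _
  have hint : ∫ x, ψ x * r x j ∂μ = inner (𝕜 := ℝ) ψ2 g2 := by
    rw [MeasureTheory.L2.inner_def]
    refine integral_congr_ae ?_
    filter_upwards [hψ2.coeFn_toLp, hg2.coeFn_toLp] with x h1 h2
    simp [h1, h2, RCLike.inner_apply]
    simp only [ψ2, g2, h1, h2]; ring
  have hcs := abs_real_inner_le_norm ψ2 g2
  rw [hint]
  refine hcs.trans ?_
  have hψ2n : ‖ψ2‖ ≤ (μ Set.univ).toReal ^ ((1:ℝ)/4) * ‖ψ‖ := by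
    rw [Lp.norm_toLp, Lp.norm_def]
    have h := eLpNorm_le_eLpNorm_mul_rpow_measure_univ (μ := μ)
      (p := 2) (q := 4) (by norm_num) (Lp.aestronglyMeasurable ψ)
    have hexp : (1 / ENNReal.toReal 2 - 1 / ENNReal.toReal 4 : ℝ) = (1:ℝ)/4 := by
      norm_num
    rw [hexp] at h
    calc (eLpNorm (fun x => ψ x) 2 μ).toReal
        ≤ (eLpNorm (ψ : α → ℝ) 4 μ * μ Set.univ ^ ((1:ℝ)/4)).toReal := by
          apply ENNReal.toReal_mono _ h
          exact ENNReal.mul_ne_top (Lp.eLpNorm_ne_top ψ)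
            (by simp [ENNReal.rpow_eq_top_iff, measure_ne_top μ Set.univ])
      _ = (μ Set.univ).toReal ^ ((1:ℝ)/4) * (eLpNorm (ψ : α → ℝ) 4 μ).toReal := by
          rw [ENNReal.toReal_mul, ENNReal.toReal_rpow, mul_comm]
  have hg2n : ‖g2‖ ≤ ‖r‖ := by
    rw [Lp.norm_toLp, Lp.norm_def]
    apply ENNReal.toReal_mono (Lp.eLpNorm_ne_top r)
    exact eLpNorm_mono_ae (Filter.Eventually.of_forall fun x => hbd _)
  exact mul_le_mul hψ2n hg2n (norm_nonneg _)
    (mul_nonneg (Real.rpow_nonneg ENNReal.toReal_nonneg _)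
      (by rw [MeasureTheory.Lp.norm_def]; exact ENNReal.toReal_nonneg))

/-- coercivity of `Ã((s,φ),(r,ψ)) = κ∫ s·r − U∫ φ êd·r` on the kernel,
i.e. on pairs `(r,ψ)` with `ψ ∈ H̃¹(Ω)` and `r = ∇ψ`.  The membership `ψ ∈ H̃¹` and
`r = ∇ψ` enter through the Friedrichs–Poincaré inequality `‖ψ‖_{H¹} ≤ C_FP |ψ|_{H¹}`
(with `|ψ|_{H¹} = ‖r‖_{L²}`) and the Sobolev embedding `‖ψ‖_{L⁴} ≤ ‖i₄‖ ‖ψ‖_{H¹}`,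
encoded by the abstract `H¹`-norm value `H1` together with `hPF` and `hEmb`. -/
theorem formAtilde_coercive {α : Type*} [MeasurableSpace α] (μ : Measure α)
    [IsFiniteMeasure μ] {d : ℕ} (hd : d = 2 ∨ d = 3)
    (κ U CFP i4 : ℝ) (hκ : 0 < κ) (hU : 0 < U) (hCFP : 0 < CFP) (hi4 : 0 < i4)
    (hsmall : U / κ * (μ Set.univ).toReal ^ ((1 : ℝ) / 4) < min 1 (CFP⁻¹ ^ 2 * i4⁻¹ ^ 2))
    (j : Fin d)
    (r : Lp (EuclideanSpace ℝ (Fin d)) 2 μ) (ψ : Lp ℝ 4 μ)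
    (hψ0 : ∫ x, ψ x ∂μ = 0)
    (H1 : ℝ) (hPF : H1 ≤ CFP * ‖r‖) (hEmb : ‖ψ‖ ≤ i4 * H1) :
    0 < κ / 2 * (min 1 (CFP⁻¹ ^ 2 * i4⁻¹ ^ 2)
        - U / κ * (μ Set.univ).toReal ^ ((1 : ℝ) / 4)) ∧
    κ * (∫ x, ∑ i, r x i * r x i ∂μ) - U * ∫ x, ψ x * r x j ∂μ
      ≥ κ / 2 * (min 1 (CFP⁻¹ ^ 2 * i4⁻¹ ^ 2)
          - U / κ * (μ Set.univ).toReal ^ ((1 : ℝ) / 4))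
        * (‖r‖ ^ 2 + ‖ψ‖ ^ 2) := by
  rw [aux_integral_sq_eq_norm_sq]
  set m : ℝ := min 1 (CFP⁻¹ ^ 2 * i4⁻¹ ^ 2) with hm
  set M : ℝ := (μ Set.univ).toReal ^ ((1 : ℝ) / 4) with hM
  have hMnn : 0 ≤ M := Real.rpow_nonneg ENNReal.toReal_nonneg _
  have hpos : 0 < κ / 2 * (m - U / κ * M) := by
    have : 0 < m - U / κ * M := by linarith [hsmall]
    positivity
  refine ⟨hpos, ?_⟩
  set X : ℝ := ‖r‖ with hX
  set Y : ℝ := ‖ψ‖ with hY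
  have hXnn : 0 ≤ X := norm_nonneg r
  have hYnn : 0 ≤ Y := by rw [hY, MeasureTheory.Lp.norm_def]; exact ENNReal.toReal_nonneg
  have hcross := aux_cross_bound μ j r ψ
  -- from hPF, hEmb : Y ≤ i4 * CFP * X
  have hYX : Y ≤ i4 * CFP * X := by
    calc Y ≤ i4 * H1 := hEmb
      _ ≤ i4 * (CFP * X) := by
          exact mul_le_mul_of_nonneg_left hPF hi4.le
      _ = i4 * CFP * X := by ring
  -- m * Y^2 ≤ X^2
  have hmY : m * Y ^ 2 ≤ X ^ 2 := by
    have h1 : m ≤ CFP⁻¹ ^ 2 * i4⁻¹ ^ 2 := min_le_right _ _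
    have h2 : Y ^ 2 ≤ (i4 * CFP * X) ^ 2 := by
      apply pow_le_pow_left₀ hYnn hYX
    have h3 : m * Y ^ 2 ≤ CFP⁻¹ ^ 2 * i4⁻¹ ^ 2 * ((i4 * CFP * X) ^ 2) := by
      have hY2 : (0:ℝ) ≤ Y ^ 2 := sq_nonneg _
      calc m * Y ^ 2 ≤ CFP⁻¹ ^ 2 * i4⁻¹ ^ 2 * Y ^ 2 := by nlinarith
        _ ≤ CFP⁻¹ ^ 2 * i4⁻¹ ^ 2 * ((i4 * CFP * X) ^ 2) := by
            apply mul_le_mul_of_nonneg_left h2; positivity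
    calc m * Y ^ 2 ≤ CFP⁻¹ ^ 2 * i4⁻¹ ^ 2 * ((i4 * CFP * X) ^ 2) := h3
      _ = X ^ 2 := by field_simp
  have hmX : m * X ^ 2 ≤ X ^ 2 := by
    have : m ≤ 1 := min_le_left _ _
    nlinarith [sq_nonneg X]
  -- cross term bound
  have hI : U * ∫ x, ψ x * r x j ∂μ ≤ U * (M * Y * X) := by
    have h2 : |∫ x, ψ x * r x j ∂μ| ≤ M * Y * X := by
      simpa [hM, hX, hY, mul_assoc] using hcross
    have h1 : ∫ x, ψ x * r x j ∂μ ≤ M * Y * X :=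
      (le_abs_self _).trans h2
    exact mul_le_mul_of_nonneg_left h1 hU.le
  have hYoung : Y * X ≤ (X ^ 2 + Y ^ 2) / 2 := by nlinarith [sq_nonneg (X - Y)]
  have hRHS : κ / 2 * (m - U / κ * M) * (X ^ 2 + Y ^ 2)
      = κ / 2 * m * (X ^ 2 + Y ^ 2) - U / 2 * M * (X ^ 2 + Y ^ 2) := by
    field_simp
  rw [hRHS]
  have h5 : κ / 2 * (m * (X ^ 2 + Y ^ 2)) ≤ κ / 2 * (2 * X ^ 2) :=
    mul_le_mul_of_nonneg_left (by linarith) (by positivity)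
  have h6 : U * M * (Y * X) ≤ U * M * ((X ^ 2 + Y ^ 2) / 2) :=
    mul_le_mul_of_nonneg_left hYoung (mul_nonneg hU.le hMnn)
  linarith
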